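/- Let ψ(z) = Σ_{i=0}^{D-1} (2ω_c/(Dπ))·sinc((2ω_c/(Dπ))·(i - (D-1)/2))·z^{-i} be the truncated ideal low-pass filter, evaluated at z = e^{-2iωε} with ε = 1/D. Then as D → ∞, |ψ(z(ω))| converges to |Si(ω + ω_c) - Si(ω - ω_c)|/π, where Si(s) = ∫₀^s (sin θ)/θ dθ is the sine integral. -/

import Mathlib

noncomputable def Si (s : ℝ) : ℝ := ∫ θ in (0:ℝ)..s, Real.sin θ / θ

noncomputable def sinc (x : ℝ) : ℝ :=
  if x = 0 then 1 else Real.sin (Real.pi * x) / (Real.pi * x)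

open Filter MeasureTheory intervalIntegral
open Real hiding sinc continuous_sinc abs_sinc_le_one

lemma tendsto_sin_div : Tendsto (fun x : ℝ => Real.sin x / x) (nhdsWithin 0 {(0:ℝ)}ᶜ) (nhds 1) := by
  have h := (Real.hasDerivAt_sin 0)
  rw [hasDerivAt_iff_tendsto_slope] at h
  simp only [Real.cos_zero] at h
  refine h.congr' ?_
  filter_upwards [self_mem_nhdsWithin] with x hx
  simp only [slope, Real.sin_zero, sub_zero, vsub_eq_sub, smul_eq_mul]
  ring

lemma continuous_sinc : Continuous sinc := by
  rw [continuous_iff_continuousAt]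
  intro x
  rcases eq_or_ne x 0 with rfl | hx
  · have hmul : Tendsto (fun x : ℝ => Real.pi * x) (nhdsWithin 0 {(0:ℝ)}ᶜ)
        (nhdsWithin 0 {(0:ℝ)}ᶜ) := by
      apply tendsto_nhdsWithin_of_tendsto_nhds_of_eventually_within
      · have hcont : Continuous (fun x : ℝ => Real.pi * x) := by fun_prop
        have h := (hcont.tendsto (0:ℝ)).mono_left
          (nhdsWithin_le_nhds (s := {(0:ℝ)}ᶜ))
        simpa using h
      · filter_upwards [self_mem_nhdsWithin] with y hy
        simp only [Set.mem_compl_iff, Set.mem_singleton_iff] at hy ⊢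
        exact mul_ne_zero Real.pi_ne_zero hy
    have h1 : Tendsto sinc (nhdsWithin 0 {(0:ℝ)}ᶜ) (nhds 1) := by
      refine (tendsto_sin_div.comp hmul).congr' ?_
      filter_upwards [self_mem_nhdsWithin] with y hy
      simp only [Set.mem_compl_iff, Set.mem_singleton_iff] at hy
      simp [sinc, hy, Function.comp]
    unfold ContinuousAt
    have h0 : sinc 0 = 1 := by simp [sinc]
    rw [h0, ← nhdsNE_sup_pure]
    refine h1.sup ?_
    simpa [h0] using tendsto_pure_nhds sinc 0
  · have hc : ContinuousAt (fun x => Real.sin (Real.pi * x) / (Real.pi * x)) x :=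
      ContinuousAt.div (by fun_prop) (by fun_prop) (mul_ne_zero Real.pi_ne_zero hx)
    refine hc.congr ?_
    filter_upwards [isOpen_compl_singleton.mem_nhds hx] with y hy
    simp only [Set.mem_compl_iff, Set.mem_singleton_iff] at hy
    simp [sinc, hy]

lemma abs_sinc_le_one (x : ℝ) : |sinc x| ≤ 1 := by
  unfold sinc
  split_ifs with h
  · simp
  · rw [abs_div, div_le_one (by positivity : (0:ℝ) < |Real.pi * x|)]
    exact Real.abs_sin_le_abs

noncomputable def phi (v : ℝ) : ℝ := Real.sin v / v

lemma phi_ae : (fun v => sinc (v / Real.pi)) =ᵐ[volume] phi := by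
  have h0 : ∀ᵐ (v : ℝ), v ≠ 0 := by
    simp [ae_iff]
  filter_upwards [h0] with v hv
  have : v / Real.pi ≠ 0 := div_ne_zero hv Real.pi_ne_zero
  simp only [sinc, this, if_false, phi]
  rw [mul_div_cancel₀ _ Real.pi_ne_zero]

lemma intervalIntegrable_phi (a b : ℝ) : IntervalIntegrable phi volume a b := by
  have hc : IntervalIntegrable (fun v => sinc (v / Real.pi)) volume a b :=
    (continuous_sinc.comp (continuous_id.div_const _)).intervalIntegrable a b
  rw [intervalIntegrable_iff] at hc ⊢
  exact hc.congr (phi_ae.restrict)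

lemma Si_def (s : ℝ) : Si s = ∫ θ in (0:ℝ)..s, phi θ := rfl

lemma phi_even (x : ℝ) : phi (-x) = phi x := by
  simp [phi, neg_div_neg_eq]

lemma int_phi_neg (s : ℝ) : ∫ x in (-s)..(0:ℝ), phi x = Si s := by
  have h := intervalIntegral.integral_comp_neg (a := (0:ℝ)) (b := s) phi
  simp only [neg_zero] at h
  rw [← h, Si_def]
  congr 1
  ext x
  exact phi_even x

lemma int_phi_symm (s : ℝ) : ∫ x in (-s)..s, phi x = 2 * Si s := by
  have := intervalIntegral.integral_add_adjacent_intervals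
    (intervalIntegrable_phi (-s) 0) (intervalIntegrable_phi 0 s)
  rw [← this, int_phi_neg, ← Si_def]
  ring

lemma Si_neg (s : ℝ) : Si (-s) = -Si s := by
  rw [Si_def, ← int_phi_neg s, intervalIntegral.integral_symm]

lemma int_S (α : ℝ) : ∫ u in (-(1/2:ℝ))..(1/2), Real.sin (2*α*u) / (2*u) = Si α := by
  rcases eq_or_ne α 0 with rfl | hα
  · simp [Si_def, phi]
  · have key : (fun u : ℝ => Real.sin (2*α*u) / (2*u)) = fun u => α * phi (2 * α * u) := by
      funext u
      rcases eq_or_ne u 0 with rfl | hu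
      · simp [phi]
      · simp only [phi]
        field_simp
    rw [key]
    rw [intervalIntegral.integral_const_mul]
    have h2α : (2*α) ≠ 0 := mul_ne_zero two_ne_zero hα
    have hcomp := intervalIntegral.integral_comp_mul_left (a := (-(1/2:ℝ))) (b := (1:ℝ)/2)
      phi h2α
    rw [hcomp]
    have e1 : (2*α) * (-(1/2:ℝ)) = -α := by ring
    have e2 : (2*α) * ((1:ℝ)/2) = α := by ring
    rw [e1, e2, int_phi_symm, smul_eq_mul]
    field_simp

lemma sinc_even (x : ℝ) : sinc (-x) = sinc x := by
  unfold sinc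
  rcases eq_or_ne x 0 with rfl | hx
  · simp
  · simp only [neg_eq_zero, hx, if_false, mul_neg]
    rw [Real.sin_neg, neg_div_neg_eq]

noncomputable def gg (ωc u : ℝ) : ℝ := 2 * ωc / Real.pi * sinc (2 * ωc / Real.pi * u)

lemma gg_cont : ∀ ωc, Continuous (gg ωc) := fun ωc =>
  continuous_const.mul (continuous_sinc.comp (continuous_const.mul continuous_id))

lemma gg_even (ωc u : ℝ) : gg ωc (-u) = gg ωc u := by
  unfold gg
  rw [mul_neg, sinc_even]

lemma gg_eq (ωc u : ℝ) (hu : u ≠ 0) : gg ωc u = Real.sin (2 * ωc * u) / (Real.pi * u) := by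
  unfold gg sinc
  rcases eq_or_ne (2 * ωc / Real.pi * u) 0 with h | h
  · have : 2 * ωc = 0 := by
      rcases mul_eq_zero.1 h with h' | h'
      · field_simp at h'
        linarith [h']
      · exact absurd h' hu
    rw [this]
    simp
  · rw [if_neg h]
    have hπ := Real.pi_ne_zero
    have hωc : ωc ≠ 0 := by
      intro h0
      exact h (by simp [h0])
    have e : Real.pi * (2 * ωc / Real.pi * u) = 2 * ωc * u := by field_simp
    rw [e]
    have h2 : 2 * ωc * u ≠ 0 := by
      rw [← e]; exact mul_ne_zero hπ h
    field_simp

lemma int_odd {f : ℝ → ℝ} (hf : Continuous f) (hodd : ∀ x, f (-x) = - f x) (s : ℝ) :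
    ∫ x in (-s)..s, f x = 0 := by
  have h := intervalIntegral.integral_comp_neg (a := (0:ℝ)) (b := s) f
  simp only [neg_zero] at h
  have h2 : ∫ x in (0:ℝ)..s, f (-x) = - ∫ x in (0:ℝ)..s, f x := by
    rw [← intervalIntegral.integral_neg]
    congr 1
    ext x
    exact hodd x
  have hadj := intervalIntegral.integral_add_adjacent_intervals
    (hf.intervalIntegrable (μ := volume) (-s) 0) (hf.intervalIntegrable (μ := volume) 0 s)
  rw [← hadj, ← h, h2]
  ring

lemma integrable_S (α : ℝ) :
    IntervalIntegrable (fun u => Real.sin (2*α*u) / (2*u)) volume (-(1/2:ℝ)) (1/2) := by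
  rcases eq_or_ne α 0 with rfl | hα
  · simp only [mul_zero, zero_mul, Real.sin_zero, zero_div]
    exact intervalIntegrable_const (μ := volume)
  · have key : (fun u : ℝ => Real.sin (2*α*u) / (2*u)) = fun u => α * phi (2 * α * u) := by
      funext u
      rcases eq_or_ne u 0 with rfl | hu
      · simp [phi]
      · simp only [phi]
        field_simp
    rw [key]
    have h2α : (2*α) ≠ 0 := mul_ne_zero two_ne_zero hα
    have := (intervalIntegrable_phi ((2*α) * (-(1/2:ℝ))) ((2*α) * ((1:ℝ)/2))).comp_mul_left (c := 2*α)
  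
    have e1 : (2*α) * (-(1/2:ℝ)) / (2*α) = -(1/2:ℝ) := by field_simp
    have e2 : (2*α) * ((1:ℝ)/2) / (2*α) = (1:ℝ)/2 := by field_simp
    rw [e1, e2] at this
    exact this.const_mul α

lemma int_A (ωc ω : ℝ) (hωc : 0 < ωc) :
    ∫ u in (-(1/2:ℝ))..(1/2), gg ωc u * Real.cos (2*ω*u)
      = (Si (ω + ωc) - Si (ω - ωc)) / Real.pi := by
  have hcongr : ∫ u in (-(1/2:ℝ))..(1/2), gg ωc u * Real.cos (2*ω*u)
      = ∫ u in (-(1/2:ℝ))..(1/2),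
          (1/Real.pi) * (Real.sin (2*(ωc+ω)*u) / (2*u) + Real.sin (2*(ωc-ω)*u) / (2*u)) := by
    apply intervalIntegral.integral_congr_ae
    have h0 : ∀ᵐ (u : ℝ), u ≠ 0 := by simp [ae_iff]
    filter_upwards [h0] with u hu _
    rw [gg_eq ωc u hu]
    have hs1 : Real.sin (2*(ωc+ω)*u) = Real.sin (2*ωc*u) * Real.cos (2*ω*u)
        + Real.cos (2*ωc*u) * Real.sin (2*ω*u) := by
      rw [← Real.sin_add]; ring_nf
    have hs2 : Real.sin (2*(ωc-ω)*u) = Real.sin (2*ωc*u) * Real.cos (2*ω*u)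
        - Real.cos (2*ωc*u) * Real.sin (2*ω*u) := by
      rw [← Real.sin_sub]; ring_nf
    rw [hs1, hs2]
    have hπ := Real.pi_ne_zero
    field_simp
    ring
  rw [hcongr, intervalIntegral.integral_const_mul,
    intervalIntegral.integral_add (integrable_S (ωc+ω)) (integrable_S (ωc-ω)),
    int_S, int_S]
  have h1 : Si (ωc + ω) = Si (ω + ωc) := by rw [add_comm]
  have h2 : Si (ωc - ω) = - Si (ω - ωc) := by
    rw [← Si_neg]; ring_nf
  rw [h1, h2]
  field_simp
  ring

lemma int_B (ωc ω : ℝ) :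
    ∫ u in (-(1/2:ℝ))..(1/2), gg ωc u * Real.sin (2*ω*u) = 0 := by
  apply int_odd
  · exact (gg_cont ωc).mul (Real.continuous_sin.comp (by fun_prop))
  · intro x
    rw [gg_even, mul_neg, Real.sin_neg]
    ring

lemma norm_int (ωc ω : ℝ) (hωc : 0 < ωc) :
    ‖∫ t in (0:ℝ)..1, ((gg ωc (t - 1/2) : ℝ) : ℂ) *
        Complex.exp (2 * Complex.I * (ω:ℂ) * (t:ℂ))‖
      = |Si (ω + ωc) - Si (ω - ωc)| / Real.pi := by
  have hshift := intervalIntegral.integral_comp_add_right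
    (a := (-(1/2:ℝ))) (b := (1:ℝ)/2)
    (fun t : ℝ => ((gg ωc (t - 1/2) : ℝ) : ℂ) * Complex.exp (2 * Complex.I * (ω:ℂ) * (t:ℂ)))
    (1/2)
  norm_num at hshift
  rw [← hshift]
  have hpt : ∀ x : ℝ, ((gg ωc x : ℝ) : ℂ) *
      Complex.exp (2 * Complex.I * (ω:ℂ) * ((x:ℂ) + 1/2))
      = Complex.exp (Complex.I * (ω:ℂ)) *
        (((gg ωc x * Real.cos (2*ω*x) : ℝ) : ℂ) + ((gg ωc x * Real.sin (2*ω*x) : ℝ):ℂ) * Complex.I) := by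
    intro x
    have e1 : (2 * Complex.I * (ω:ℂ) * ((x:ℂ) + 1/2))
        = ((2*ω*x : ℝ):ℂ) * Complex.I + Complex.I * (ω:ℂ) := by
      push_cast
      ring
    rw [e1, Complex.exp_add, Complex.exp_mul_I]
    push_cast [Complex.ofReal_cos, Complex.ofReal_sin]
    ring
  rw [intervalIntegral.integral_congr (fun x _ => hpt x)]
  rw [intervalIntegral.integral_const_mul]
  have hA : IntervalIntegrable (fun x : ℝ => ((gg ωc x * Real.cos (2*ω*x) : ℝ) : ℂ))
      volume (-(1/2:ℝ)) (1/2) := by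
    apply Continuous.intervalIntegrable
    exact Complex.continuous_ofReal.comp ((gg_cont ωc).mul (Real.continuous_cos.comp (by fun_prop)))
  have hB : IntervalIntegrable (fun x : ℝ => ((gg ωc x * Real.sin (2*ω*x) : ℝ) : ℂ) * Complex.I)
      volume (-(1/2:ℝ)) (1/2) := by
    apply Continuous.intervalIntegrable
    exact (Complex.continuous_ofReal.comp
      ((gg_cont ωc).mul (Real.continuous_sin.comp (by fun_prop)))).mul continuous_const
  rw [intervalIntegral.integral_add hA hB, intervalIntegral.integral_mul_const,
    intervalIntegral.integral_ofReal, intervalIntegral.integral_ofReal,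
    int_A ωc ω hωc, int_B ωc ω]
  simp only [Complex.ofReal_zero, zero_mul, add_zero, norm_mul]
  have hnorm1 : ‖Complex.exp (Complex.I * (ω:ℂ))‖ = 1 := by
    rw [Complex.norm_exp]
    simp
  rw [hnorm1, one_mul, Complex.norm_real, Real.norm_eq_abs, abs_div,
    abs_of_pos Real.pi_pos]

noncomputable def cc (ωc ω : ℝ) (D i : ℕ) : ℂ :=
  ((gg ωc (((i:ℝ) - ((D:ℝ) - 1) / 2) / (D:ℝ)) : ℝ) : ℂ) *
    Complex.exp (2 * Complex.I * (ω:ℂ) * (((i:ℝ) / (D:ℝ) : ℝ) : ℂ))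

noncomputable def GG (ωc ω : ℝ) (D : ℕ) (t : ℝ) : ℂ := cc ωc ω D (⌈(D:ℝ) * t⌉₊ - 1)

lemma term_eq (ωc ω : ℝ) (D i : ℕ) (hD : 0 < D) :
    ((2 * ωc / (D * Real.pi)) *
        sinc ((2 * ωc / (D * Real.pi)) * (i - (D - 1) / 2)) : ℂ) *
      Complex.exp (-2 * Complex.I * ω * (1 / (D:ℝ))) ^ (-(i:ℤ))
    = ((1 / (D:ℝ) : ℝ) : ℂ) * cc ωc ω D i := by
  have hDℝ : (D:ℝ) ≠ 0 := Nat.cast_ne_zero.mpr hD.ne'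
  have hπ := Real.pi_ne_zero
  have harg : (2 * ωc / ((D:ℝ) * Real.pi)) * ((i:ℝ) - ((D:ℝ) - 1) / 2)
      = 2 * ωc / Real.pi * (((i:ℝ) - ((D:ℝ) - 1) / 2) / (D:ℝ)) := by
    ring
  have hexp : Complex.exp (-2 * Complex.I * (ω:ℂ) * (1 / ((D:ℝ) : ℂ))) ^ (-(i:ℤ))
      = Complex.exp (2 * Complex.I * (ω:ℂ) * (((i:ℝ) / (D:ℝ) : ℝ) : ℂ)) := by
    rw [← Complex.exp_int_mul]
    congr 1
    push_cast
    have hDℂ : (D:ℂ) ≠ 0 := by exact_mod_cast hDℝ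
    field_simp
  rw [harg, hexp]
  unfold cc gg
  push_cast
  have hDℂ : (D:ℂ) ≠ 0 := by exact_mod_cast hDℝ
  have hπℂ : (Real.pi : ℂ) ≠ 0 := by exact_mod_cast hπ
  field_simp

lemma GG_eq_on (ωc ω : ℝ) (D k : ℕ) (hD : 0 < D) :
    ∀ t ∈ Set.Ioc ((k:ℝ)/(D:ℝ)) (((k:ℝ)+1)/(D:ℝ)), GG ωc ω D t = cc ωc ω D k := by
  intro t ht
  have hDℝ : (0:ℝ) < (D:ℝ) := by exact_mod_cast hD
  have hceil : ⌈(D:ℝ) * t⌉₊ = k + 1 := by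
    rw [Nat.ceil_eq_iff (Nat.succ_ne_zero k)]
    constructor
    · have := ht.1
      calc ((k+1-1 : ℕ):ℝ) = (k:ℝ) := by push_cast; ring
        _ < (D:ℝ) * t := by
          rw [div_lt_iff₀ hDℝ] at this
          linarith [this]
    · have h2 := ht.2
      rw [le_div_iff₀ hDℝ] at h2
      push_cast
      linarith [h2]
  unfold GG
  rw [hceil]
  simp

lemma piece_integrable (ωc ω : ℝ) (D k : ℕ) (hD : 0 < D) :
    IntervalIntegrable (GG ωc ω D) volume ((k:ℝ)/(D:ℝ)) (((k:ℝ)+1)/(D:ℝ)) := by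
  have hDℝ : (0:ℝ) < (D:ℝ) := by exact_mod_cast hD
  have hle : (k:ℝ)/(D:ℝ) ≤ ((k:ℝ)+1)/(D:ℝ) := by gcongr; linarith
  rw [intervalIntegrable_iff_integrableOn_Ioc_of_le hle]
  have hconst : IntegrableOn (fun _ : ℝ => cc ωc ω D k)
      (Set.Ioc ((k:ℝ)/(D:ℝ)) (((k:ℝ)+1)/(D:ℝ))) volume := by
    exact integrableOn_const measure_Ioc_lt_top.ne
  exact hconst.congr_fun (fun t ht => (GG_eq_on ωc ω D k hD t ht).symm) measurableSet_Ioc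

lemma piece_integral (ωc ω : ℝ) (D k : ℕ) (hD : 0 < D) :
    ∫ t in ((k:ℝ)/(D:ℝ))..(((k:ℝ)+1)/(D:ℝ)), GG ωc ω D t
      = ((1 / (D:ℝ) : ℝ) : ℂ) * cc ωc ω D k := by
  have hDℝ : (0:ℝ) < (D:ℝ) := by exact_mod_cast hD
  have hle : (k:ℝ)/(D:ℝ) ≤ ((k:ℝ)+1)/(D:ℝ) := by gcongr; linarith
  rw [intervalIntegral.integral_of_le hle,
    MeasureTheory.setIntegral_congr_fun measurableSet_Ioc (GG_eq_on ωc ω D k hD),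
    MeasureTheory.setIntegral_const, Real.volume_real_Ioc_of_le hle]
  have he : ((k:ℝ)+1)/(D:ℝ) - (k:ℝ)/(D:ℝ) = 1/(D:ℝ) := by
    field_simp
    ring
  rw [he, Complex.real_smul]

lemma sum_eq_integral (ωc ω : ℝ) (D : ℕ) (hD : 0 < D) :
    ∑ i ∈ Finset.range D, ((1 / (D:ℝ) : ℝ) : ℂ) * cc ωc ω D i
      = ∫ t in (0:ℝ)..1, GG ωc ω D t := by
  have hDℝ : (0:ℝ) < (D:ℝ) := by exact_mod_cast hD
  have h := intervalIntegral.sum_integral_adjacent_intervals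
    (a := fun k : ℕ => (k:ℝ)/(D:ℝ)) (n := D) (μ := volume) (f := GG ωc ω D) ?_
  · have h0 : ((0:ℕ):ℝ)/(D:ℝ) = 0 := by simp
    have h1 : ((D:ℕ):ℝ)/(D:ℝ) = 1 := div_self hDℝ.ne'
    rw [h0, h1] at h
    rw [← h]
    apply Finset.sum_congr rfl
    intro k _
    simp only [Nat.cast_add, Nat.cast_one]
    rw [piece_integral ωc ω D k hD]
  · intro k _
    simp only [Nat.cast_add, Nat.cast_one]
    exact piece_integrable ωc ω D k hD

lemma GG_meas (ωc ω : ℝ) (D : ℕ) : Measurable (GG ωc ω D) := by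
  have h1 : Measurable (fun t : ℝ => ⌈(D:ℝ) * t⌉₊) := by
    apply Monotone.measurable
    intro a b hab
    exact Nat.ceil_mono (mul_le_mul_of_nonneg_left hab (Nat.cast_nonneg D))
  exact (measurable_from_nat (f := fun n => cc ωc ω D (n - 1))).comp h1

lemma abs_gg_le (ωc : ℝ) (hωc : 0 < ωc) (u : ℝ) : |gg ωc u| ≤ 2 * ωc / Real.pi := by
  unfold gg
  rw [abs_mul]
  have h1 : |2 * ωc / Real.pi| = 2 * ωc / Real.pi := abs_of_pos (by positivity)
  rw [h1]
  calc 2 * ωc / Real.pi * |sinc (2 * ωc / Real.pi * u)|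
      ≤ 2 * ωc / Real.pi * 1 := by
        apply mul_le_mul_of_nonneg_left (abs_sinc_le_one _) (by positivity)
    _ = 2 * ωc / Real.pi := mul_one _

lemma exp_re_zero (ω r : ℝ) : ‖Complex.exp (2 * Complex.I * (ω:ℂ) * ((r:ℝ):ℂ))‖ = 1 := by
  rw [Complex.norm_exp]
  have : (2 * Complex.I * (ω:ℂ) * ((r:ℝ):ℂ)).re = 0 := by simp
  rw [this, Real.exp_zero]

lemma norm_cc_le (ωc ω : ℝ) (hωc : 0 < ωc) (D i : ℕ) :
    ‖cc ωc ω D i‖ ≤ 2 * ωc / Real.pi := by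
  unfold cc
  rw [norm_mul, exp_re_zero, mul_one, Complex.norm_real, Real.norm_eq_abs]
  exact abs_gg_le ωc hωc _

lemma GG_tendsto (ωc ω : ℝ) (t : ℝ) (ht : 0 < t) :
    Filter.Tendsto (fun D : ℕ => GG ωc ω D t) Filter.atTop
      (nhds (((gg ωc (t - 1/2) : ℝ) : ℂ) * Complex.exp (2 * Complex.I * (ω:ℂ) * (t:ℂ)))) := by
  have hlow : Filter.Tendsto (fun D : ℕ => t - 1/(D:ℝ)) Filter.atTop (nhds t) := by
    have := tendsto_const_nhds (x := t) (f := Filter.atTop (α := ℕ))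
      |>.sub tendsto_one_div_atTop_nhds_zero_nat
    simpa using this
  have hiD : Filter.Tendsto (fun D : ℕ => (((⌈(D:ℝ) * t⌉₊ - 1 : ℕ)):ℝ)/(D:ℝ))
      Filter.atTop (nhds t) := by
    apply tendsto_of_tendsto_of_tendsto_of_le_of_le' hlow
      (tendsto_const_nhds : Filter.Tendsto (fun _ : ℕ => t) Filter.atTop (nhds t))
    · filter_upwards [Filter.eventually_ge_atTop 1] with D hD
      have hDℝ : (0:ℝ) < (D:ℝ) := by exact_mod_cast hD
      have hpos : 0 < (D:ℝ) * t := by positivity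
      have h1 : 1 ≤ ⌈(D:ℝ) * t⌉₊ := Nat.one_le_iff_ne_zero.mpr (Nat.ceil_pos.mpr hpos).ne'
      rw [Nat.cast_sub h1, Nat.cast_one, le_div_iff₀ hDℝ]
      have hle := Nat.le_ceil ((D:ℝ) * t)
      have key : (t - 1/(D:ℝ)) * (D:ℝ) = (D:ℝ) * t - 1 := by field_simp
      rw [key]
      linarith [hle]
    · filter_upwards [Filter.eventually_ge_atTop 1] with D hD
      have hDℝ : (0:ℝ) < (D:ℝ) := by exact_mod_cast hD
      have hpos : 0 < (D:ℝ) * t := by positivity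
      have h1 : 1 ≤ ⌈(D:ℝ) * t⌉₊ := Nat.one_le_iff_ne_zero.mpr (Nat.ceil_pos.mpr hpos).ne'
      rw [Nat.cast_sub h1, Nat.cast_one, div_le_iff₀ hDℝ]
      have hc := Nat.ceil_lt_add_one hpos.le
      have : t * (D:ℝ) = (D:ℝ) * t := mul_comm _ _
      linarith [hc]
  have hhalf : Filter.Tendsto (fun D : ℕ => ((D:ℝ) - 1)/(2*(D:ℝ))) Filter.atTop (nhds (1/2)) := by
    have h2 : Filter.Tendsto (fun D : ℕ => 1/2 - 1/(2*(D:ℝ))) Filter.atTop (nhds (1/2)) := by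
      have hz : Filter.Tendsto (fun D : ℕ => 1/(2*(D:ℝ))) Filter.atTop (nhds 0) := by
        have := tendsto_one_div_atTop_nhds_zero_nat.const_mul (1/2 : ℝ)
        simp only [mul_zero] at this
        apply this.congr
        intro D
        field_simp
      have := (tendsto_const_nhds (x := (1/2:ℝ)) (f := Filter.atTop (α := ℕ))).sub hz
      simpa using this
    apply h2.congr'
    filter_upwards [Filter.eventually_ge_atTop 1] with D hD
    have hDℝ : (0:ℝ) < (D:ℝ) := by exact_mod_cast hD
    field_simp
  have harg : Filter.Tendsto
      (fun D : ℕ => ((((⌈(D:ℝ) * t⌉₊ - 1 : ℕ)):ℝ) - ((D:ℝ) - 1)/2)/(D:ℝ))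
      Filter.atTop (nhds (t - 1/2)) := by
    have := hiD.sub hhalf
    apply this.congr'
    filter_upwards [Filter.eventually_ge_atTop 1] with D hD
    have hDℝ : (0:ℝ) < (D:ℝ) := by exact_mod_cast hD
    field_simp
  have hgg : Filter.Tendsto
      (fun D : ℕ => ((gg ωc (((((⌈(D:ℝ) * t⌉₊ - 1 : ℕ)):ℝ) - ((D:ℝ) - 1)/2)/(D:ℝ)) : ℝ) : ℂ))
      Filter.atTop (nhds ((gg ωc (t - 1/2) : ℝ) : ℂ)) :=
    (Complex.continuous_ofReal.comp (gg_cont ωc)).continuousAt.tendsto.comp harg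
  have hexpc : Continuous (fun r : ℝ => Complex.exp (2 * Complex.I * (ω:ℂ) * ((r:ℝ):ℂ))) := by
    fun_prop
  have hexp : Filter.Tendsto
      (fun D : ℕ => Complex.exp (2 * Complex.I * (ω:ℂ) *
        (((((⌈(D:ℝ) * t⌉₊ - 1 : ℕ)):ℝ)/(D:ℝ) : ℝ):ℂ)))
      Filter.atTop (nhds (Complex.exp (2 * Complex.I * (ω:ℂ) * (t:ℂ)))) :=
    hexpc.continuousAt.tendsto.comp hiD
  exact hgg.mul hexp

lemma integral_tendsto (ωc ω : ℝ) (hωc : 0 < ωc) :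
    Filter.Tendsto (fun D : ℕ => ∫ t in (0:ℝ)..1, GG ωc ω D t) Filter.atTop
      (nhds (∫ t in (0:ℝ)..1,
        ((gg ωc (t - 1/2) : ℝ) : ℂ) * Complex.exp (2 * Complex.I * (ω:ℂ) * (t:ℂ)))) := by
  apply intervalIntegral.tendsto_integral_filter_of_dominated_convergence
    (bound := fun _ => 2 * ωc / Real.pi)
  · exact Filter.Eventually.of_forall fun D => ((GG_meas ωc ω D).aestronglyMeasurable).restrict
  · exact Filter.Eventually.of_forall fun D =>
      Filter.Eventually.of_forall fun x _ => norm_cc_le ωc ω hωc D _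
  · exact intervalIntegrable_const
  · apply Filter.Eventually.of_forall
    intro x hx
    have hx' : x ∈ Set.Ioc (0:ℝ) 1 := by
      rwa [Set.uIoc_of_le (by norm_num : (0:ℝ) ≤ 1)] at hx
    exact GG_tendsto ωc ω x hx'.1

open Filter in
theorem lowpass_filter_limit (ωc : ℝ) (hωc : 0 < ωc) (ω : ℝ) :
    Tendsto (fun D : ℕ =>
        ‖∑ i ∈ Finset.range D,
            ((2 * ωc / (D * Real.pi)) *
              sinc ((2 * ωc / (D * Real.pi)) * (i - (D - 1) / 2)) : ℂ) *
            Complex.exp (-2 * Complex.I * ω * (1 / (D:ℝ))) ^ (-(i:ℤ))‖)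
      atTop
      (nhds (|Si (ω + ωc) - Si (ω - ωc)| / Real.pi)) := by
  have hmain := (integral_tendsto ωc ω hωc).norm
  rw [norm_int ωc ω hωc] at hmain
  apply hmain.congr'
  filter_upwards [eventually_ge_atTop 1] with D hD
  have hD0 : 0 < D := hD
  congr 1
  rw [← sum_eq_integral ωc ω D hD0]
  exact (Finset.sum_congr rfl fun i _ => term_eq ωc ω D i hD0).symm
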